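/- Suppose demand is symmetric, θ_i = θ > 0 for all i ∈ L, and 0 < I < W. Then every optimal tuple (p, f, x, y) for the platform's problem satisfies f_{ii}^τ + y_{ii}^τ ≤ f_{ττ}^τ + y_{ττ}^τ for all i, τ ∈ L. -/

import Mathlib

open Finset

/-- Feasibility of a tuple `(p, f, x, y)` for the platform's problem:
prices in `[0,1]`, nonnegativity, flow balance, full dispatch,
market clearing, and the supply constraint. -/
def Feasible {L : Type*} [Fintype L] (θ : L → ℝ) (α : L → L → ℝ) (s : L → ℝ)
    (p : L → L → ℝ) (f : L → L → L → ℝ) (x : L → L → ℝ) (y : L → L → L → ℝ) : Prop :=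
  (∀ i j, 0 ≤ p i j ∧ p i j ≤ 1) ∧
  (∀ i j τ, 0 ≤ f i j τ) ∧ (∀ i j τ, 0 ≤ y i j τ) ∧ (∀ i τ, 0 ≤ x i τ) ∧
  (∀ i τ, x i τ = ∑ j, (f j i τ + y j i τ)) ∧
  (∀ i τ, (∑ j, (f i j τ + y i j τ)) = x i τ) ∧
  (∀ i j, (∑ τ, f i j τ) = θ i * α i j * (1 - p i j)) ∧
  (∀ τ, (∑ i, x i τ) ≤ s τ)

/-- The platform's revenue objective. -/
noncomputable def Revenue {L : Type*} [Fintype L] (W I : ℝ)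
    (p : L → L → ℝ) (f : L → L → L → ℝ) (x : L → L → ℝ) : ℝ :=
  (∑ i, ∑ j, ∑ τ, f i j τ * p i j) - W * (∑ i, ∑ τ, x i τ) + I * (∑ τ, x τ τ)

lemma sum_if1 {L : Type*} [Fintype L] [DecidableEq L] (i : L) (P : Prop) [Decidable P] (δ : ℝ) :
    (∑ a : L, if a = i ∧ P then δ else 0) = if P then δ else 0 := by
  simp [ite_and]

lemma sum_if2 {L : Type*} [Fintype L] [DecidableEq L] (P : Prop) [Decidable P] (i : L)
    (Q : Prop) [Decidable Q] (δ : ℝ) :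
    (∑ a : L, if P ∧ a = i ∧ Q then δ else 0) = if P ∧ Q then δ else 0 := by
  by_cases hP : P <;> simp [hP, ite_and]

lemma sum_if2' {L : Type*} [Fintype L] [DecidableEq L] (P : Prop) [Decidable P] (i : L) (δ : ℝ) :
    (∑ a : L, if P ∧ a = i then δ else 0) = if P then δ else 0 := by
  by_cases hP : P <;> simp [hP]

lemma sum_if3 {L : Type*} [Fintype L] [DecidableEq L] (P Q : Prop) [Decidable P] [Decidable Q]
    (i : L) (δ : ℝ) :
    (∑ a : L, if P ∧ Q ∧ a = i then δ else 0) = if P ∧ Q then δ else 0 := by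
  by_cases hP : P <;> by_cases hQ : Q <;> simp [hP, hQ]

lemma aux1 {L : Type*} [Fintype L] [DecidableEq L] (θfun : L → ℝ) (α : L → L → ℝ) (s : L → ℝ)
    (W I : ℝ) (p : L → L → ℝ) (f : L → L → L → ℝ) (x : L → L → ℝ) (y : L → L → L → ℝ)
    (i τ : L) (hne : i ≠ τ)
    (hfeas : Feasible θfun α s p f x y) (hy : 0 < y i i τ) (hI : 0 < I) :
    ∃ p' f' x' y', Feasible θfun α s p' f' x' y' ∧
      Revenue W I p f x < Revenue W I p' f' x' := by
  obtain ⟨hp, hf0, hy0, hx0, hbal, hdis, hmc, hsup⟩ := hfeas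
  set δ := y i i τ with hδ
  have hxiτ : δ ≤ x i τ := by
    rw [hbal]
    calc δ ≤ f i i τ + y i i τ := by linarith [hf0 i i τ]
    _ ≤ ∑ j, (f j i τ + y j i τ) :=
        Finset.single_le_sum (f := fun j => f j i τ + y j i τ)
          (fun j _ => add_nonneg (hf0 j i τ) (hy0 j i τ)) (mem_univ i)
  refine ⟨p, f,
    (fun a c => x a c + (if a = τ ∧ c = τ then δ else 0) - (if a = i ∧ c = τ then δ else 0)),
    (fun a b c => y a b c + (if a = τ ∧ b = τ ∧ c = τ then δ else 0)
      - (if a = i ∧ b = i ∧ c = τ then δ else 0)), ?_, ?_⟩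
  · refine ⟨hp, hf0, ?_, ?_, ?_, ?_, hmc, ?_⟩
    · intro a b c
      dsimp only
      split_ifs with h1 h2 h2
      · exact absurd (h2.1.symm.trans h1.1) hne
      · linarith [hy0 a b c]
      · obtain ⟨rfl, rfl, rfl⟩ := h2; simp; linarith [hδ]
      · linarith [hy0 a b c]
    · intro a c
      dsimp only
      split_ifs with h1 h2 h2
      · exact absurd (h2.1.symm.trans h1.1) hne
      · linarith [hx0 a c]
      · obtain ⟨rfl, rfl⟩ := h2; simpa using hxiτ
      · linarith [hx0 a c]
    · intro a c
      dsimp only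
      have : ∀ j : L, f j a c + (y j a c + (if j = τ ∧ a = τ ∧ c = τ then δ else 0)
          - (if j = i ∧ a = i ∧ c = τ then δ else 0))
          = (f j a c + y j a c) + (if j = τ ∧ (a = τ ∧ c = τ) then δ else 0)
          - (if j = i ∧ (a = i ∧ c = τ) then δ else 0) := by
        intro j; ring
      rw [Finset.sum_congr rfl (fun j _ => this j), Finset.sum_sub_distrib,
        Finset.sum_add_distrib, sum_if1, sum_if1, ← hbal]
    · intro a c
      dsimp only
      have : ∀ j : L, f a j c + (y a j c + (if a = τ ∧ j = τ ∧ c = τ then δ else 0)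
          - (if a = i ∧ j = i ∧ c = τ then δ else 0))
          = (f a j c + y a j c) + (if a = τ ∧ j = τ ∧ c = τ then δ else 0)
          - (if a = i ∧ j = i ∧ c = τ then δ else 0) := by
        intro j; ring
      rw [Finset.sum_congr rfl (fun j _ => this j), Finset.sum_sub_distrib,
        Finset.sum_add_distrib, sum_if2, sum_if2, hdis]
    · intro c
      dsimp only
      rw [Finset.sum_sub_distrib, Finset.sum_add_distrib, sum_if1, sum_if1]
      have := hsup c
      split_ifs with h1 h2 h2 <;> simp_all <;> linarith
  · unfold Revenue
    have hW : (∑ a, ∑ c, (x a c + (if a = τ ∧ c = τ then δ else 0)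
        - (if a = i ∧ c = τ then δ else 0))) = ∑ a, ∑ c, x a c := by
      have : ∀ a : L, (∑ c, (x a c + (if a = τ ∧ c = τ then δ else 0)
          - (if a = i ∧ c = τ then δ else 0)))
          = (∑ c, x a c) + (if a = τ then δ else 0) - (if a = i then δ else 0) := by
        intro a
        rw [Finset.sum_sub_distrib, Finset.sum_add_distrib, sum_if2', sum_if2']
      rw [Finset.sum_congr rfl (fun a _ => this a), Finset.sum_sub_distrib,
        Finset.sum_add_distrib]
      simp
  
    have hI' : (∑ c, (x c c + (if c = τ ∧ c = τ then δ else 0)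
        - (if c = i ∧ c = τ then δ else 0))) = (∑ c, x c c) + δ := by
      rw [Finset.sum_sub_distrib, Finset.sum_add_distrib]
      have e1 : (∑ c : L, if c = τ ∧ c = τ then δ else 0) = δ := by simp
      have e2 : (∑ c : L, if c = i ∧ c = τ then δ else 0) = 0 := by
        apply Finset.sum_eq_zero; intro c _
        simp only [ite_eq_right_iff, and_imp]
        rintro rfl rfl; exact absurd rfl hne
      rw [e1, e2]; ring
    rw [hW, hI']
    nlinarith [hy, hI]

lemma aux2 {L : Type*} [Fintype L] [DecidableEq L] (θfun : L → ℝ) (α : L → L → ℝ) (s : L → ℝ)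
    (W I : ℝ) (p : L → L → ℝ) (f : L → L → L → ℝ) (x : L → L → ℝ) (y : L → L → L → ℝ)
    (i τ τ'' : L) (hne : i ≠ τ) (hne2 : τ'' ≠ τ)
    (hfeas : Feasible θfun α s p f x y) (hfi : 0 < f i i τ) (hf2 : 0 < f τ τ τ'')
    (hI : 0 < I) :
    ∃ p' f' x' y', Feasible θfun α s p' f' x' y' ∧
      Revenue W I p f x < Revenue W I p' f' x' := by
  obtain ⟨hp, hf0, hy0, hx0, hbal, hdis, hmc, hsup⟩ := hfeas
  set δ := min (f i i τ) (f τ τ τ'') with hδ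
  have hδpos : 0 < δ := lt_min hfi hf2
  have hδ1 : δ ≤ f i i τ := min_le_left _ _
  have hδ2 : δ ≤ f τ τ τ'' := min_le_right _ _
  have hxiτ : δ ≤ x i τ := by
    rw [hbal]
    calc δ ≤ f i i τ + y i i τ := by linarith [hy0 i i τ]
    _ ≤ ∑ j, (f j i τ + y j i τ) :=
        Finset.single_le_sum (f := fun j => f j i τ + y j i τ)
          (fun j _ => add_nonneg (hf0 j i τ) (hy0 j i τ)) (mem_univ i)
  have hxτ2 : δ ≤ x τ τ'' := by
    rw [hbal]
    calc δ ≤ f τ τ τ'' + y τ τ τ'' := by linarith [hy0 τ τ τ'']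
    _ ≤ ∑ j, (f j τ τ'' + y j τ τ'') :=
        Finset.single_le_sum (f := fun j => f j τ τ'' + y j τ τ'')
          (fun j _ => add_nonneg (hf0 j τ τ'') (hy0 j τ τ'')) (mem_univ τ)
  set f' : L → L → L → ℝ := fun a b c => f a b c
      + (if a = τ ∧ b = τ ∧ c = τ then δ else 0) - (if a = i ∧ b = i ∧ c = τ then δ else 0)
      + (if a = i ∧ b = i ∧ c = τ'' then δ else 0) - (if a = τ ∧ b = τ ∧ c = τ'' then δ else 0)
    with hf'
  set x' : L → L → ℝ := fun a c => x a c
      + (if a = τ ∧ c = τ then δ else 0) - (if a = i ∧ c = τ then δ else 0)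
      + (if a = i ∧ c = τ'' then δ else 0) - (if a = τ ∧ c = τ'' then δ else 0) with hx'
  have hfsum : ∀ a b, (∑ c, f' a b c) = ∑ c, f a b c := by
    intro a b
    rw [hf']
    simp only
    rw [Finset.sum_sub_distrib, Finset.sum_add_distrib, Finset.sum_sub_distrib,
      Finset.sum_add_distrib, sum_if3, sum_if3, sum_if3, sum_if3]
    ring
  refine ⟨p, f', x', y, ?_, ?_⟩
  · refine ⟨hp, ?_, hy0, ?_, ?_, ?_, ?_, ?_⟩
    · intro a b c
      rw [hf']; simp only
      by_cases h2 : a = i ∧ b = i ∧ c = τ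
      · obtain ⟨rfl, rfl, rfl⟩ := h2
        simp [hne, Ne.symm hne2]
        linarith
      · by_cases h4 : a = τ ∧ b = τ ∧ c = τ''
        · obtain ⟨rfl, rfl, rfl⟩ := h4
          simp [Ne.symm hne, hne2]
          linarith
        · rw [if_neg h2, if_neg h4]
          split_ifs <;> simp <;> linarith [hf0 a b c, hδpos.le]
    · intro a c
      rw [hx']; simp only
      by_cases h2 : a = i ∧ c = τ
      · obtain ⟨rfl, rfl⟩ := h2
        simp [hne, Ne.symm hne2]
        linarith
      · by_cases h4 : a = τ ∧ c = τ''
        · obtain ⟨rfl, rfl⟩ := h4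
          simp [Ne.symm hne, hne2]
          linarith
        · rw [if_neg h2, if_neg h4]
          split_ifs <;> simp <;> linarith [hx0 a c, hδpos.le]
    · intro a c
      rw [hx']; simp only
      have e : ∀ j : L, f' j a c + y j a c = (f j a c + y j a c)
          + (if j = τ ∧ (a = τ ∧ c = τ) then δ else 0)
          - (if j = i ∧ (a = i ∧ c = τ) then δ else 0)
          + (if j = i ∧ (a = i ∧ c = τ'') then δ else 0)
          - (if j = τ ∧ (a = τ ∧ c = τ'') then δ else 0) := by
        intro j; rw [hf']; simp only [and_assoc]; ring
      rw [Finset.sum_congr rfl (fun j _ => e j), Finset.sum_sub_distrib,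
        Finset.sum_add_distrib, Finset.sum_sub_distrib, Finset.sum_add_distrib,
        sum_if1, sum_if1, sum_if1, sum_if1, ← hbal]
    · intro a c
      rw [hx']; simp only
      have e : ∀ j : L, f' a j c + y a j c = (f a j c + y a j c)
          + (if a = τ ∧ j = τ ∧ c = τ then δ else 0)
          - (if a = i ∧ j = i ∧ c = τ then δ else 0)
          + (if a = i ∧ j = i ∧ c = τ'' then δ else 0)
          - (if a = τ ∧ j = τ ∧ c = τ'' then δ else 0) := by
        intro j; rw [hf']; ring
      rw [Finset.sum_congr rfl (fun j _ => e j), Finset.sum_sub_distrib,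
        Finset.sum_add_distrib, Finset.sum_sub_distrib, Finset.sum_add_distrib,
        sum_if2, sum_if2, sum_if2, sum_if2, hdis]
    · intro a b; rw [hfsum]; exact hmc a b
    · intro c
      have e : ∀ a : L, x' a c = x a c
          + (if a = τ ∧ c = τ then δ else 0) - (if a = i ∧ c = τ then δ else 0)
          + (if a = i ∧ c = τ'' then δ else 0) - (if a = τ ∧ c = τ'' then δ else 0) := by
        intro a; rw [hx']
      rw [Finset.sum_congr rfl (fun a _ => e a), Finset.sum_sub_distrib,
        Finset.sum_add_distrib, Finset.sum_sub_distrib, Finset.sum_add_distrib,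
        sum_if1, sum_if1, sum_if1, sum_if1]
      have := hsup c
      split_ifs <;> linarith
  · unfold Revenue
    have hfp : (∑ a, ∑ b, ∑ c, f' a b c * p a b) = ∑ a, ∑ b, ∑ c, f a b c * p a b := by
      refine Finset.sum_congr rfl (fun a _ => Finset.sum_congr rfl (fun b _ => ?_))
      rw [← Finset.sum_mul, ← Finset.sum_mul, hfsum]
    have hW : (∑ a, ∑ c, x' a c) = ∑ a, ∑ c, x a c := by
      have e : ∀ a : L, (∑ c, x' a c) = (∑ c, x a c)
          + (if a = τ then δ else 0) - (if a = i then δ else 0)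
          + (if a = i then δ else 0) - (if a = τ then δ else 0) := by
        intro a
        rw [hx']; simp only
        rw [Finset.sum_sub_distrib, Finset.sum_add_distrib, Finset.sum_sub_distrib,
          Finset.sum_add_distrib, sum_if2', sum_if2', sum_if2', sum_if2']
      rw [Finset.sum_congr rfl (fun a _ => e a)]
      refine Finset.sum_congr rfl (fun a _ => ?_); ring
    have hIt : (∑ c, x c c) + δ ≤ ∑ c, x' c c := by
      have e : ∀ c : L, x' c c = x c c
          + (if c = τ ∧ c = τ then δ else 0) - (if c = i ∧ c = τ then δ else 0)
          + (if c = i ∧ c = τ'' then δ else 0) - (if c = τ ∧ c = τ'' then δ else 0) := by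
        intro c; rw [hx']
      rw [Finset.sum_congr rfl (fun c _ => e c), Finset.sum_sub_distrib,
        Finset.sum_add_distrib, Finset.sum_sub_distrib, Finset.sum_add_distrib]
      have e1 : (∑ c : L, if c = τ ∧ c = τ then δ else 0) = δ := by simp
      have e2 : (∑ c : L, if c = i ∧ c = τ then δ else 0) = 0 := by
        apply Finset.sum_eq_zero; intro c _
        simp only [ite_eq_right_iff, and_imp]; rintro rfl rfl; exact absurd rfl hne
      have e4 : (∑ c : L, if c = τ ∧ c = τ'' then δ else 0) = 0 := by
        apply Finset.sum_eq_zero; intro c _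
        simp only [ite_eq_right_iff, and_imp]; rintro rfl rfl; exact absurd rfl (Ne.symm hne2)
      have e3 : 0 ≤ (∑ c : L, if c = i ∧ c = τ'' then δ else 0) := by
        apply Finset.sum_nonneg; intro c _; split_ifs <;> linarith
      rw [e1, e2, e4]
      linarith
    rw [hfp, hW]
    nlinarith

lemma aux3 {L : Type*} [Fintype L] [DecidableEq L] (θfun : L → ℝ) (α : L → L → ℝ) (s : L → ℝ)
    (W I : ℝ) (p : L → L → ℝ) (f : L → L → L → ℝ) (x : L → L → ℝ) (y : L → L → L → ℝ)
    (i τ : L) (hne : i ≠ τ) (c0 : ℝ) (hc0 : 0 < c0) (hcab : ∀ a b, θfun a * α a b = c0)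
    (hfeas : Feasible θfun α s p f x y) (hfi : 0 < f i i τ) (hpp : p i i < p τ τ)
    (hI : 0 < I) :
    ∃ p' f' x' y', Feasible θfun α s p' f' x' y' ∧
      Revenue W I p f x < Revenue W I p' f' x' := by
  obtain ⟨hp, hf0, hy0, hx0, hbal, hdis, hmc, hsup⟩ := hfeas
  set ε := min (p τ τ - p i i) (f i i τ / c0) with hε
  have hεpos : 0 < ε := lt_min (by linarith) (div_pos hfi hc0)
  have hε1 : ε ≤ p τ τ - p i i := min_le_left _ _
  set δ := c0 * ε with hδ
  have hδpos : 0 < δ := mul_pos hc0 hεpos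
  have hδ1 : δ ≤ f i i τ := by
    have : ε ≤ f i i τ / c0 := min_le_right _ _
    rw [hδ]
    calc c0 * ε ≤ c0 * (f i i τ / c0) := by nlinarith
    _ = f i i τ := by field_simp
  have hxiτ : δ ≤ x i τ := by
    rw [hbal]
    calc δ ≤ f i i τ + y i i τ := by linarith [hy0 i i τ]
    _ ≤ ∑ j, (f j i τ + y j i τ) :=
        Finset.single_le_sum (f := fun j => f j i τ + y j i τ)
          (fun j _ => add_nonneg (hf0 j i τ) (hy0 j i τ)) (mem_univ i)
  set p' : L → L → ℝ := fun a b => p a b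
      + (if a = i ∧ b = i then ε else 0) - (if a = τ ∧ b = τ then ε else 0) with hp'
  set f' : L → L → L → ℝ := fun a b c => f a b c
      + (if a = τ ∧ b = τ ∧ c = τ then δ else 0) - (if a = i ∧ b = i ∧ c = τ then δ else 0)
    with hf'
  set x' : L → L → ℝ := fun a c => x a c
      + (if a = τ ∧ c = τ then δ else 0) - (if a = i ∧ c = τ then δ else 0) with hx'
  have hpii : p' i i = p i i + ε := by rw [hp']; simp [hne]
  have hpττ : p' τ τ = p τ τ - ε := by rw [hp']; simp [Ne.symm hne]
  have hpother : ∀ a b, ¬(a = i ∧ b = i) → ¬(a = τ ∧ b = τ) → p' a b = p a b := by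
    intro a b h1 h2; rw [hp']; simp only; rw [if_neg h1, if_neg h2]; ring
  have hmc' : ∀ a b, (∑ c, f' a b c) = θfun a * α a b * (1 - p' a b) := by
    intro a b
    have e : (∑ c, f' a b c) = (∑ c, f a b c)
        + (if a = τ ∧ b = τ then δ else 0) - (if a = i ∧ b = i then δ else 0) := by
      rw [hf']; simp only
      rw [Finset.sum_sub_distrib, Finset.sum_add_distrib, sum_if3, sum_if3]
    rw [e, hmc a b]
    by_cases h1 : a = i ∧ b = i
    · rw [h1.1, h1.2, hpii]
      have t1 : (if i = τ ∧ i = τ then δ else 0) = 0 := by simp [hne]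
      have t2 : (if i = i ∧ i = i then δ else 0) = δ := by simp
      rw [t1, t2, hcab, hδ]; ring
    · by_cases h2 : a = τ ∧ b = τ
      · rw [h2.1, h2.2, hpττ]
        have t1 : (if τ = τ ∧ τ = τ then δ else 0) = δ := by simp
        have t2 : (if τ = i ∧ τ = i then δ else 0) = 0 := by simp [Ne.symm hne]
        rw [t1, t2, hcab, hδ]; ring
      · rw [hpother a b h1 h2, if_neg h1, if_neg h2]; ring
  refine ⟨p', f', x', y, ?_, ?_⟩
  · refine ⟨?_, ?_, hy0, ?_, ?_, ?_, hmc', ?_⟩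
    · intro a b
      by_cases h1 : a = i ∧ b = i
      · rw [h1.1, h1.2, hpii]
        exact ⟨by linarith [(hp i i).1], by linarith [(hp τ τ).2]⟩
      · by_cases h2 : a = τ ∧ b = τ
        · rw [h2.1, h2.2, hpττ]
          exact ⟨by linarith [(hp i i).1], by linarith [(hp τ τ).2]⟩
        · rw [hpother a b h1 h2]; exact hp a b
    · intro a b c
      rw [hf']; simp only
      split_ifs with h1 h2 h2
      · exact absurd (h2.1.symm.trans h1.1) hne
      · linarith [hf0 a b c]
      · obtain ⟨rfl, rfl, rfl⟩ := h2; simp; linarith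
      · linarith [hf0 a b c]
    · intro a c
      rw [hx']; simp only
      split_ifs with h1 h2 h2
      · exact absurd (h2.1.symm.trans h1.1) hne
      · linarith [hx0 a c]
      · obtain ⟨rfl, rfl⟩ := h2; simp; linarith
      · linarith [hx0 a c]
    · intro a c
      rw [hx']; simp only
      have e : ∀ j : L, f' j a c + y j a c = (f j a c + y j a c)
          + (if j = τ ∧ (a = τ ∧ c = τ) then δ else 0)
          - (if j = i ∧ (a = i ∧ c = τ) then δ else 0) := by
        intro j; rw [hf']; simp only [and_assoc]; ring
      rw [Finset.sum_congr rfl (fun j _ => e j), Finset.sum_sub_distrib,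
        Finset.sum_add_distrib, sum_if1, sum_if1, ← hbal]
    · intro a c
      rw [hx']; simp only
      have e : ∀ j : L, f' a j c + y a j c = (f a j c + y a j c)
          + (if a = τ ∧ j = τ ∧ c = τ then δ else 0)
          - (if a = i ∧ j = i ∧ c = τ then δ else 0) := by
        intro j; rw [hf']; ring
      rw [Finset.sum_congr rfl (fun j _ => e j), Finset.sum_sub_distrib,
        Finset.sum_add_distrib, sum_if2, sum_if2, hdis]
    · intro c
      have e : ∀ a : L, x' a c = x a c
          + (if a = τ ∧ c = τ then δ else 0) - (if a = i ∧ c = τ then δ else 0) := by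
        intro a; rw [hx']
      rw [Finset.sum_congr rfl (fun a _ => e a), Finset.sum_sub_distrib,
        Finset.sum_add_distrib, sum_if1, sum_if1]
      have := hsup c
      split_ifs <;> linarith
  · unfold Revenue
    set d1 : ℝ := c0 * ((1 - p i i - ε) * (p i i + ε) - (1 - p i i) * (p i i)) with hd1
    set d2 : ℝ := c0 * ((1 - p τ τ + ε) * (p τ τ - ε) - (1 - p τ τ) * (p τ τ)) with hd2
    have key : ∀ a b, (∑ c, f' a b c * p' a b) = (∑ c, f a b c * p a b)
        + (if a = i ∧ b = i then d1 else 0) + (if a = τ ∧ b = τ then d2 else 0) := by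
      intro a b
      rw [← Finset.sum_mul, ← Finset.sum_mul, hmc' a b, hmc a b]
      by_cases h1 : a = i ∧ b = i
      · rw [h1.1, h1.2, hpii]
        have t1 : (if i = i ∧ i = i then d1 else 0) = d1 := by simp
        have t2 : (if i = τ ∧ i = τ then d2 else 0) = 0 := by simp [hne]
        rw [t1, t2, hcab, hd1]; ring
      · by_cases h2 : a = τ ∧ b = τ
        · rw [h2.1, h2.2, hpττ]
          have t1 : (if τ = i ∧ τ = i then d1 else 0) = 0 := by simp [Ne.symm hne]
          have t2 : (if τ = τ ∧ τ = τ then d2 else 0) = d2 := by simp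
          rw [t1, t2, hcab, hd2]; ring
        · rw [hpother a b h1 h2, if_neg h1, if_neg h2]; ring
    have hfp : (∑ a, ∑ b, ∑ c, f' a b c * p' a b)
        = (∑ a, ∑ b, ∑ c, f a b c * p a b) + d1 + d2 := by
      have e : ∀ a, (∑ b, ∑ c, f' a b c * p' a b) = (∑ b, ∑ c, f a b c * p a b)
          + (if a = i then d1 else 0) + (if a = τ then d2 else 0) := by
        intro a
        rw [Finset.sum_congr rfl (fun b _ => key a b), Finset.sum_add_distrib,
          Finset.sum_add_distrib, sum_if2', sum_if2']
      rw [Finset.sum_congr rfl (fun a _ => e a), Finset.sum_add_distrib,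
        Finset.sum_add_distrib]
      simp [Finset.sum_ite_eq']
    have hW : (∑ a, ∑ c, x' a c) = ∑ a, ∑ c, x a c := by
      have e : ∀ a : L, (∑ c, x' a c) = (∑ c, x a c)
          + (if a = τ then δ else 0) - (if a = i then δ else 0) := by
        intro a
        rw [hx']; simp only
        rw [Finset.sum_sub_distrib, Finset.sum_add_distrib, sum_if2', sum_if2']
      rw [Finset.sum_congr rfl (fun a _ => e a), Finset.sum_sub_distrib,
        Finset.sum_add_distrib]
      simp
    have hIt : (∑ c, x' c c) = (∑ c, x c c) + δ := by
      have e : ∀ c : L, x' c c = x c c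
          + (if c = τ ∧ c = τ then δ else 0) - (if c = i ∧ c = τ then δ else 0) := by
        intro c; rw [hx']
      rw [Finset.sum_congr rfl (fun c _ => e c), Finset.sum_sub_distrib,
        Finset.sum_add_distrib]
      have e1 : (∑ c : L, if c = τ ∧ c = τ then δ else 0) = δ := by simp
      have e2 : (∑ c : L, if c = i ∧ c = τ then δ else 0) = 0 := by
        apply Finset.sum_eq_zero; intro c _
        simp only [ite_eq_right_iff, and_imp]; rintro rfl rfl; exact absurd rfl hne
      rw [e1, e2]; ring
    rw [hfp, hW, hIt]
    have hd12 : 0 ≤ d1 + d2 := by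
      have : d1 + d2 = 2 * c0 * ε * (p τ τ - p i i - ε) := by rw [hd1, hd2]; ring
      rw [this]
      have : 0 ≤ p τ τ - p i i - ε := by linarith
      positivity
    nlinarith

/-- With symmetric demand, `θ_i = θ > 0`, and `0 < I < W`, every optimal tuple
satisfies `f_{ii}^τ + y_{ii}^τ ≤ f_{ττ}^τ + y_{ττ}^τ` for all `i, τ`. -/
theorem stmt0 {L : Type*} [Fintype L] (θfun : L → ℝ) (α : L → L → ℝ) (s : L → ℝ)
    (W I θ : ℝ)
    (hθ : ∀ i, θfun i = θ) (hθpos : 0 < θ)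
    (hα0 : ∀ i j, 0 ≤ α i j) (hα1 : ∀ i j, α i j ≤ 1) (hαsum : ∀ i, (∑ j, α i j) = 1)
    (hs : ∀ τ, 0 ≤ s τ)
    (hsym : ∀ i j k l, θfun i = θfun k ∧ α i j = α k l)
    (hIpos : 0 < I) (hIW : I < W)
    (p : L → L → ℝ) (f : L → L → L → ℝ) (x : L → L → ℝ) (y : L → L → L → ℝ)
    (hfeas : Feasible θfun α s p f x y)
    (hopt : ∀ p' f' x' y', Feasible θfun α s p' f' x' y' →
      Revenue W I p' f' x' ≤ Revenue W I p f x) :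
    ∀ i τ, f i i τ + y i i τ ≤ f τ τ τ + y τ τ τ := by
  classical
  intro i τ
  by_contra hcon
  push_neg at hcon
  have hne : i ≠ τ := by rintro rfl; exact lt_irrefl _ hcon
  obtain ⟨hp, hf0, hy0, hx0, hbal, hdis, hmc, hsup⟩ := id hfeas
  rcases (hy0 i i τ).lt_or_eq with hy | hy
  · obtain ⟨p', f', x', y', hfe, hlt⟩ := aux1 θfun α s W I p f x y i τ hne hfeas hy hIpos
    exact absurd (hopt p' f' x' y' hfe) (not_le.2 hlt)
  · have hfi : 0 < f i i τ := by nlinarith [hf0 τ τ τ, hy0 τ τ τ]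
    by_cases hex : ∃ τ'', τ'' ≠ τ ∧ 0 < f τ τ τ''
    · obtain ⟨τ'', hne2, hf2⟩ := hex
      obtain ⟨p', f', x', y', hfe, hlt⟩ :=
        aux2 θfun α s W I p f x y i τ τ'' hne hne2 hfeas hfi hf2 hIpos
      exact absurd (hopt p' f' x' y' hfe) (not_le.2 hlt)
    · push_neg at hex
      have hcα : ∀ a b, α a b = α τ τ := fun a b => (hsym a b τ τ).2
      set c0 := θ * α τ τ with hc0def
      have hcab : ∀ a b, θfun a * α a b = c0 := by intro a b; rw [hθ a, hcα a b]
      have hατ : 0 < α τ τ := by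
        have hL : Nonempty L := ⟨τ⟩
        have hcard : 0 < (Fintype.card L : ℝ) := by exact_mod_cast Fintype.card_pos
        have hsum1 : (∑ j : L, α τ j) = (Fintype.card L : ℝ) * α τ τ := by
          rw [Finset.sum_congr rfl (fun j _ => hcα τ j), Finset.sum_const,
            Finset.card_univ, nsmul_eq_mul]
        have h1 : (Fintype.card L : ℝ) * α τ τ = 1 := by rw [← hsum1]; exact hαsum τ
        nlinarith
      have hc0 : 0 < c0 := mul_pos hθpos hατ
      have hsumττ : (∑ c, f τ τ c) = f τ τ τ := by
        apply Finset.sum_eq_single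
        · intro c _ hc; exact le_antisymm (hex c hc) (hf0 τ τ c)
        · intro h; exact absurd (mem_univ τ) h
      have hfττ : f τ τ τ = c0 * (1 - p τ τ) := by rw [← hsumττ, hmc, hcab]
      have hfii_le : f i i τ ≤ c0 * (1 - p i i) := by
        rw [← hcab i i, ← hmc]
        exact Finset.single_le_sum (f := fun c => f i i c) (fun c _ => hf0 i i c) (mem_univ τ)
      have hpp : p i i < p τ τ := by
        have h1 : c0 * (1 - p τ τ) < c0 * (1 - p i i) := by nlinarith [hy0 τ τ τ]
        have h2 : 1 - p τ τ < 1 - p i i := (mul_lt_mul_iff_right₀ hc0).1 h1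
        linarith
      obtain ⟨p', f', x', y', hfe, hlt⟩ :=
        aux3 θfun α s W I p f x y i τ hne c0 hc0 hcab hfeas hfi hpp hIpos
      exact absurd (hopt p' f' x' y' hfe) (not_le.2 hlt)
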